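/- Let n ≥ 1, let τ_i > 0 for i = 1,…,n, and let 0 ≤ α_1 < α_2 < … < α_n < 1. Then the function f(s) = Σ_{i=1}^{n} τ_i s^{α_i} (using the principal branch of the complex power) has no zeros in ℂ \ {0}. -/

import Mathlib

open Complex Finset

theorem stmt0 (n : ℕ) (hn : 1 ≤ n) (τ α : Fin n → ℝ)
    (hτ : ∀ i, 0 < τ i) (hα0 : ∀ i, 0 ≤ α i) (hα1 : ∀ i, α i < 1)
    (hmono : StrictMono α) :
    ∀ s : ℂ, s ≠ 0 → (∑ i, (τ i : ℂ) * s ^ (α i : ℂ)) ≠ 0 := by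
  intro s hs h
  obtain ⟨m, rfl⟩ : ∃ m, n = m + 1 := ⟨n - 1, (Nat.succ_pred_eq_of_pos hn).symm⟩
  set θ := s.arg with hθ
  set A := α (Fin.last m) with hA
  set θ0 := A * θ / 2 with hθ0
  have habs : 0 < ‖s‖ := norm_pos_iff.mpr hs
  have hcpow : ∀ a : ℝ, s ^ (a : ℂ) =
      ((‖s‖ ^ a : ℝ) : ℂ) * Complex.exp ((a * θ : ℝ) * I) := by
    intro a
    rw [Complex.cpow_def_of_ne_zero hs]
    have hlog : Complex.log s * a
        = ((a * Real.log (‖s‖) : ℝ) : ℂ) + ((a * θ : ℝ) : ℂ) * I := by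
      rw [Complex.log]
      push_cast
      ring
    rw [hlog, Complex.exp_add, ← Complex.ofReal_exp,
      Real.rpow_def_of_pos habs, mul_comm (Real.log _)]
  have hterm : ∀ i : Fin (m + 1),
      (Complex.exp (((-θ0 : ℝ) : ℂ) * I) * ((τ i : ℂ) * s ^ ((α i : ℝ) : ℂ))).re
      = τ i * ‖s‖ ^ α i * Real.cos (α i * θ - θ0) := by
    intro i
    rw [hcpow]
    have : Complex.exp (((-θ0 : ℝ) : ℂ) * I)
        * ((τ i : ℂ) * (((‖s‖ ^ α i : ℝ) : ℂ) * Complex.exp (((α i * θ : ℝ) : ℂ) * I)))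
        = ((τ i * ‖s‖ ^ α i : ℝ) : ℂ)
          * Complex.exp (((α i * θ - θ0 : ℝ) : ℂ) * I) := by
      rw [mul_comm (Complex.exp _), mul_assoc, mul_assoc, ← Complex.exp_add,
        ← add_mul]
      push_cast
      ring_nf
    rw [this, Complex.re_ofReal_mul, Complex.exp_ofReal_mul_I_re]
  have hπ : (0:ℝ) < Real.pi := Real.pi_pos
  have hθle : |θ| ≤ Real.pi := abs_le.mpr ⟨le_of_lt (Complex.neg_pi_lt_arg s), Complex.arg_le_pi s⟩
  have hA0 : 0 ≤ A := hα0 _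
  have hA1 : A < 1 := hα1 _
  have hpos : ∀ i : Fin (m + 1),
      0 < τ i * ‖s‖ ^ α i * Real.cos (α i * θ - θ0) := by
    intro i
    have hiA : α i ≤ A := hmono.monotone (Fin.le_last i)
    have habs1 : |α i * θ - θ0| < Real.pi / 2 := by
      have : α i * θ - θ0 = θ * (α i - A / 2) := by rw [hθ0]; ring
      rw [this, abs_mul]
      have h1 : |α i - A / 2| ≤ A / 2 := by
        rw [abs_le]; constructor <;> [linarith [hα0 i]; linarith]
      calc |θ| * |α i - A / 2| ≤ Real.pi * (A / 2) := by
            apply mul_le_mul hθle h1 (abs_nonneg _) (le_of_lt hπ)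
        _ < Real.pi / 2 := by nlinarith
    have hcos : 0 < Real.cos (α i * θ - θ0) := by
      apply Real.cos_pos_of_mem_Ioo
      constructor
      · linarith [(abs_lt.mp habs1).1]
      · exact (abs_lt.mp habs1).2
    exact mul_pos (mul_pos (hτ i) (Real.rpow_pos_of_pos habs _)) hcos
  have hre : 0 < (Complex.exp (((-θ0 : ℝ) : ℂ) * I) * ∑ i, (τ i : ℂ) * s ^ ((α i : ℝ) : ℂ)).re := by
    rw [Finset.mul_sum, Complex.re_sum]
    have : ∀ i ∈ Finset.univ, 0 < (Complex.exp (((-θ0 : ℝ) : ℂ) * I) * ((τ i : ℂ) * s ^ ((α i : ℝ) : ℂ))).re := by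
      intro i _
      rw [hterm i]
      exact hpos i
    exact Finset.sum_pos this ⟨Fin.last m, Finset.mem_univ _⟩
  rw [h, mul_zero] at hre
  simp at hre
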